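/- arXiv:1612.03754 — 2 statements merged into one kernel-verified Lean document; each statement's English description precedes it below -/
import Mathlib

section
/- Let G be a commutative topological group, let n, s ≥ 1, and let {h_{i,j}} (1 ≤ i ≤ n, 1 ≤ j ≤ s) be elements of G such that for every (i_1, …, i_s) ∈ {1, …, n}^s the set {h_{i_1,1}, …, h_{i_s,s}} topologically generates G. Suppose f : G → ℂ is continuous and satisfies Δ_{h_{n,k}} ⋯ Δ_{h_{2,k}} Δ_{h_{1,k}} f = 0 for every k = 1, …, s. Then f is a polynomial, i.e. there exists a nonnegative integer N such that Δ_{g_{N+1}} Δ_{g_N} ⋯ Δ_{g_1} f = 0 for all g_1, …, g_{N+1} ∈ G. -/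
noncomputable section

/-- Forward difference operator: `Δ_h f x = f (x + h) - f x`. -/
def fwdDiffOp {G M : Type*} [AddCommGroup G] [AddCommGroup M] (h : G) (f : G → M) : G → M :=
  fun x => f (x + h) - f x

/-- Mixed differences along a list of steps; the head of the list is applied outermost,
so `mixedDiff [g_m, …, g_1] f = Δ_{g_m} ⋯ Δ_{g_1} f`. -/
def mixedDiff {G M : Type*} [AddCommGroup G] [AddCommGroup M] : List G → (G → M) → (G → M)
  | [], f => f
  | h :: t, f => fwdDiffOp h (mixedDiff t f)

/-- Translation operator: `τ_h f x = f (x + h)`. -/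
def transOp {G M : Type*} [AddCommGroup G] (h : G) (f : G → M) : G → M :=
  fun x => f (x + h)

section helpers
variable {G M : Type*} [AddCommGroup G] [AddCommGroup M]

lemma fwdDiffOp_comm (a b : G) (f : G → M) :
    fwdDiffOp a (fwdDiffOp b f) = fwdDiffOp b (fwdDiffOp a f) := by
  funext x
  simp only [fwdDiffOp]
  rw [add_right_comm x b a]
  abel

lemma fwdDiffOp_zero_fun (a : G) : fwdDiffOp a (0 : G → M) = 0 := by
  funext x; simp [fwdDiffOp]

lemma fwdDiffOp_add (a : G) (f g : G → M) :
    fwdDiffOp a (f + g) = fwdDiffOp a f + fwdDiffOp a g := by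
  funext x; simp only [fwdDiffOp, Pi.add_apply]; abel

lemma fwdDiffOp_neg (a : G) (f : G → M) : fwdDiffOp a (-f) = -fwdDiffOp a f := by
  funext x; simp only [fwdDiffOp, Pi.neg_apply]; abel

lemma fwdDiffOp_trans (a b : G) (f : G → M) :
    fwdDiffOp a (transOp b f) = transOp b (fwdDiffOp a f) := by
  funext x; simp [fwdDiffOp, transOp, add_right_comm]

lemma transOp_zero_fun (b : G) : transOp b (0 : G → M) = 0 := rfl

lemma mixedDiff_zero (L : List G) : mixedDiff L (0 : G → M) = 0 := by
  induction L with
  | nil => rfl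
  | cons a t ih => simp [mixedDiff, ih, fwdDiffOp_zero_fun]

lemma mixedDiff_add (L : List G) (f g : G → M) :
    mixedDiff L (f + g) = mixedDiff L f + mixedDiff L g := by
  induction L with
  | nil => rfl
  | cons a t ih => simp [mixedDiff, ih, fwdDiffOp_add]

lemma mixedDiff_neg (L : List G) (f : G → M) :
    mixedDiff L (-f) = -mixedDiff L f := by
  induction L with
  | nil => rfl
  | cons a t ih => simp [mixedDiff, ih, fwdDiffOp_neg]

lemma mixedDiff_trans (L : List G) (b : G) (f : G → M) :
    mixedDiff L (transOp b f) = transOp b (mixedDiff L f) := by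
  induction L with
  | nil => rfl
  | cons a t ih => simp [mixedDiff, ih, fwdDiffOp_trans]

lemma mixedDiff_fwdDiffOp (L : List G) (a : G) (f : G → M) :
    mixedDiff L (fwdDiffOp a f) = fwdDiffOp a (mixedDiff L f) := by
  induction L with
  | nil => rfl
  | cons b t ih => simp [mixedDiff, ih, fwdDiffOp_comm]

lemma mixedDiff_append (L1 L2 : List G) (f : G → M) :
    mixedDiff (L1 ++ L2) f = mixedDiff L1 (mixedDiff L2 f) := by
  induction L1 with
  | nil => rfl
  | cons a t ih => simp [mixedDiff, ih]

lemma mixedDiff_perm {L L' : List G} (hp : L.Perm L') (f : G → M) :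
    mixedDiff L f = mixedDiff L' f := by
  induction hp with
  | nil => rfl
  | cons a _ ih => simp [mixedDiff, ih]
  | swap a b l => simp [mixedDiff, fwdDiffOp_comm]
  | trans _ _ ih1 ih2 => exact ih1.trans ih2

def IsPolyDeg (N : ℕ) (f : G → M) : Prop :=
  ∀ L : List G, L.length = N + 1 → mixedDiff L f = 0

lemma isPolyDeg_zero_fun (N : ℕ) : IsPolyDeg N (0 : G → M) :=
  fun L _ => mixedDiff_zero L

lemma isPolyDeg_mono {N M' : ℕ} {f : G → M} (h : IsPolyDeg N f) (hNM : N ≤ M') :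
    IsPolyDeg M' f := by
  intro L hL
  have hdrop : (L.drop (M' - N)).length = N + 1 := by
    rw [List.length_drop, hL]; omega
  rw [← List.take_append_drop (M' - N) L, mixedDiff_append, h _ hdrop, mixedDiff_zero]

end helpers

lemma mixedDiff_continuous {G : Type*} [AddCommGroup G] [TopologicalSpace G]
    [IsTopologicalAddGroup G] (L : List G) {f : G → ℂ} (hf : Continuous f) :
    Continuous (mixedDiff L f) := by
  induction L with
  | nil => exact hf
  | cons a t ih => exact (ih.comp (continuous_add_right a)).sub ih

lemma exists_uniform {G : Type*} [AddCommGroup G] (f : G → ℂ) (L : List G)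
    (H : ∀ a ∈ L, ∃ N, IsPolyDeg N (fwdDiffOp a f)) :
    ∃ N, ∀ a ∈ L, IsPolyDeg N (fwdDiffOp a f) := by
  induction L with
  | nil => exact ⟨0, by simp⟩
  | cons b t ih =>
    obtain ⟨N1, hN1⟩ := H b (List.mem_cons_self)
    obtain ⟨N2, hN2⟩ := ih (fun a ha => H a (List.mem_cons_of_mem _ ha))
    refine ⟨max N1 N2, ?_⟩
    intro a ha
    rcases List.mem_cons.mp ha with rfl | ha
    · exact isPolyDeg_mono hN1 (le_max_left _ _)
    · exact isPolyDeg_mono (hN2 a ha) (le_max_right _ _)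

lemma montel_aux {G : Type*} [AddCommGroup G] [TopologicalSpace G] [IsTopologicalAddGroup G]
    {s : ℕ} (m : ℕ) :
    ∀ cols : Fin s → List G, (∑ k, (cols k).length) = m → (∀ k, cols k ≠ []) →
    (∀ sel : Fin s → G, (∀ k, sel k ∈ cols k) →
      closure ((AddSubgroup.closure (Set.range sel) : AddSubgroup G) : Set G) = Set.univ) →
    ∀ f : G → ℂ, Continuous f → (∀ k, mixedDiff (cols k) f = 0) →
    ∃ N, IsPolyDeg N f := by
  induction m using Nat.strong_induction_on with
  | _ m IH =>
    intro cols hm hne hgen f hcont hf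
    classical
    -- Step 1: every entry a of the table has Δ_a f polynomial
    have key : ∀ a : G, (∃ k, a ∈ cols k) → ∃ N, IsPolyDeg N (fwdDiffOp a f) := by
      rintro a ⟨k, hak⟩
      rcases Nat.lt_or_ge (cols k).length 2 with h2 | h2
      · -- length-one column: Δ_a f = 0
        have hl1 : (cols k).length = 1 := by
          have := List.length_pos_iff.mpr (hne k); omega
        obtain ⟨b, hb⟩ := List.length_eq_one_iff.mp hl1
        rw [hb, List.mem_singleton] at hak
        subst hak
        have h0 : fwdDiffOp a f = 0 := by
          have := hf k; rw [hb] at this; exact this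
        exact ⟨0, by rw [h0]; exact isPolyDeg_zero_fun 0⟩
      · -- erase a from column k and use the inductive hypothesis
        set cols' : Fin s → List G :=
          fun k' => if k' = k then (cols k).erase a else cols k' with hcols'
        have hel : ((cols k).erase a).length = (cols k).length - 1 :=
          List.length_erase_of_mem hak
        have hsum : (∑ k', (cols' k').length) < m := by
          rw [← hm]
          refine Finset.sum_lt_sum (fun i _ => ?_) ⟨k, Finset.mem_univ k, ?_⟩
          · by_cases h : i = k
            · subst h; simp [hcols', hel]
            · simp [hcols', h]
          · simp [hcols', hel]; omega
        have hne' : ∀ k', cols' k' ≠ [] := by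
          intro k'
          by_cases h : k' = k
          · subst h
            simp only [hcols', if_pos rfl]
            rw [← List.length_pos_iff, hel]; omega
          · simpa [hcols', h] using hne k'
        have hgen' : ∀ sel : Fin s → G, (∀ k', sel k' ∈ cols' k') →
            closure ((AddSubgroup.closure (Set.range sel) : AddSubgroup G) : Set G)
              = Set.univ := by
          intro sel hsel
          refine hgen sel fun k' => ?_
          by_cases h : k' = k
          · subst h
            exact List.mem_of_mem_erase (by simpa [hcols'] using hsel k')
          · simpa [hcols', h] using hsel k'
        have hf' : ∀ k', mixedDiff (cols' k') (fwdDiffOp a f) = 0 := by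
          intro k'
          by_cases h : k' = k
          · subst h
            simp only [hcols', if_pos rfl]
            calc mixedDiff ((cols k').erase a) (fwdDiffOp a f)
                = fwdDiffOp a (mixedDiff ((cols k').erase a) f) :=
                  mixedDiff_fwdDiffOp _ _ _
              _ = mixedDiff (a :: (cols k').erase a) f := rfl
              _ = mixedDiff (cols k') f := (mixedDiff_perm (List.perm_cons_erase hak) f).symm
              _ = 0 := hf k'
          · simp only [hcols', if_neg h]
            rw [mixedDiff_fwdDiffOp, hf k', fwdDiffOp_zero_fun]
        have hcont' : Continuous (fwdDiffOp a f) :=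
          (hcont.comp (continuous_add_right a)).sub hcont
        exact IH _ hsum cols' rfl hne' hgen' (fwdDiffOp a f) hcont' hf'
    -- Step 2: a uniform degree bound on the heads of columns
    set sel : Fin s → G := fun k => (cols k).head (hne k) with hsel
    have hselmem : ∀ k, sel k ∈ cols k := fun k => List.head_mem (hne k)
    obtain ⟨N, hN⟩ := exists_uniform f (List.ofFn sel) (fun a ha => by
      obtain ⟨i, hi⟩ := List.mem_ofFn.mp ha
      exact key a ⟨i, hi ▸ hselmem i⟩)
    -- Step 3: closed subgroup argument
    have hQadd : ∀ a b : G, IsPolyDeg N (fwdDiffOp a f) → IsPolyDeg N (fwdDiffOp b f) →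
        IsPolyDeg N (fwdDiffOp (a + b) f) := by
      intro a b ha hb L hL
      have keyab : fwdDiffOp (a + b) f = fwdDiffOp a f + transOp a (fwdDiffOp b f) := by
        funext x
        simp only [fwdDiffOp, transOp, Pi.add_apply, ← add_assoc]
        abel
      rw [keyab, mixedDiff_add, ha L hL, mixedDiff_trans, hb L hL, transOp_zero_fun,
        zero_add]
    have hQneg : ∀ a : G, IsPolyDeg N (fwdDiffOp a f) → IsPolyDeg N (fwdDiffOp (-a) f) := by
      intro a ha L hL
      have keyn : fwdDiffOp (-a) f = -(transOp (-a) (fwdDiffOp a f)) := by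
        funext x
        simp only [fwdDiffOp, transOp, Pi.neg_apply, neg_add_cancel_right]
        abel
      rw [keyn, mixedDiff_neg, mixedDiff_trans, ha L hL, transOp_zero_fun, neg_zero]
    let Q : AddSubgroup G :=
      { carrier := {g : G | IsPolyDeg N (fwdDiffOp g f)}
        zero_mem' := by
          have : fwdDiffOp (0 : G) f = 0 := by funext x; simp [fwdDiffOp]
          simp only [Set.mem_setOf_eq, this]
          exact isPolyDeg_zero_fun N
        add_mem' := fun ha hb => hQadd _ _ ha hb
        neg_mem' := fun ha => hQneg _ ha }
    have hQclosed : IsClosed (Q : Set G) := by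
      have hQeq : (Q : Set G) = ⋂ (L : List G) (_ : L.length = N + 1) (x : G),
          {g : G | mixedDiff L f (x + g) = mixedDiff L f x} := by
        ext g
        simp only [Set.mem_iInter, Set.mem_setOf_eq]
        constructor
        · intro hg L hL x
          have h1 : mixedDiff L (fwdDiffOp g f) = 0 := hg L hL
          rw [mixedDiff_fwdDiffOp] at h1
          have := congrFun h1 x
          simpa [fwdDiffOp, sub_eq_zero] using this
        · intro hg L hL
          rw [mixedDiff_fwdDiffOp]
          funext x
          simpa [fwdDiffOp, sub_eq_zero] using hg L hL x
      rw [hQeq]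
      refine isClosed_iInter fun L => isClosed_iInter fun hL => isClosed_iInter fun x => ?_
      exact isClosed_eq ((mixedDiff_continuous L hcont).comp (continuous_add_left x))
        continuous_const
    have hall : ∀ g : G, IsPolyDeg N (fwdDiffOp g f) := by
      have hsub : Set.range sel ⊆ (Q : Set G) := by
        rintro _ ⟨i, rfl⟩
        exact hN (sel i) (List.mem_ofFn.mpr ⟨i, rfl⟩)
      have hle : AddSubgroup.closure (Set.range sel) ≤ Q :=
        (AddSubgroup.closure_le Q).mpr hsub
      have hclos : closure ((AddSubgroup.closure (Set.range sel) : AddSubgroup G) : Set G)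
          ⊆ (Q : Set G) := hQclosed.closure_subset_iff.mpr hle
      intro g
      have : g ∈ closure ((AddSubgroup.closure (Set.range sel) : AddSubgroup G) : Set G) := by
        rw [hgen sel hselmem]; trivial
      exact hclos this
    -- Step 4: conclude f has degree ≤ N + 1
    refine ⟨N + 1, fun L hL => ?_⟩
    have hLne : L ≠ [] := by
      intro h; rw [h] at hL; simp at hL
    have hsplit : L.dropLast ++ [L.getLast hLne] = L := List.dropLast_append_getLast hLne
    rw [← hsplit, mixedDiff_append]
    have : mixedDiff [L.getLast hLne] f = fwdDiffOp (L.getLast hLne) f := rfl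
    rw [this]
    have hdl : L.dropLast.length = N + 1 := by
      rw [List.length_dropLast, hL]; omega
    rw [hall (L.getLast hLne) L.dropLast hdl]

/-- The span of all translates of `g`. -/
def tauSpan {G : Type*} [AddCommGroup G] (g : G → ℂ) : Submodule ℂ (G → ℂ) :=
  Submodule.span ℂ (Set.range fun h : G => transOp h g)

/-- `f` is an exponential polynomial iff the span of its translates is finite dimensional. -/
def IsExpPoly {G : Type*} [AddCommGroup G] (f : G → ℂ) : Prop :=
  FiniteDimensional ℂ (tauSpan f)

/-- **Montel-type theorem for mixed differences, topological polynomial case.**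
If for every choice `(i_1, …, i_s) ∈ {1, …, n}^s` the set `{h i_1 1, …, h i_s s}` topologically
generates the commutative topological group `G`, `f` is continuous and
`Δ_{h n k} ⋯ Δ_{h 1 k} f = 0` for each `k`, then `f` is a polynomial: there is `N` with
`Δ_{g_{N+1}} ⋯ Δ_{g_1} f = 0` for all `g_1, …, g_{N+1}`. -/
theorem montel_mixed_topological_polynomial {G : Type*} [AddCommGroup G] [TopologicalSpace G]
    [IsTopologicalAddGroup G] {n s : ℕ} (hn : 1 ≤ n) (hs : 1 ≤ s)
    (h : Fin n → Fin s → G)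
    (hgen : ∀ idx : Fin s → Fin n,
      closure ((AddSubgroup.closure (Set.range fun j : Fin s => h (idx j) j) :
        AddSubgroup G) : Set G) = Set.univ)
    (f : G → ℂ) (hcont : Continuous f)
    (hf : ∀ k : Fin s, mixedDiff (List.ofFn fun i : Fin n => h i k).reverse f = 0) :
    ∃ N : ℕ, ∀ g : Fin (N + 1) → G, mixedDiff (List.ofFn g).reverse f = 0 := by
  set cols : Fin s → List G := fun k => (List.ofFn fun i : Fin n => h i k).reverse with hcols
  have hne : ∀ k, cols k ≠ [] := by
    intro k
    rw [← List.length_pos_iff, hcols]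
    simp only [hcols, List.length_reverse, List.length_ofFn]; omega
  have hgen' : ∀ sel : Fin s → G, (∀ k, sel k ∈ cols k) →
      closure ((AddSubgroup.closure (Set.range sel) : AddSubgroup G) : Set G) = Set.univ := by
    intro sel hsel
    have hex : ∀ k, ∃ i, h i k = sel k := by
      intro k
      have := hsel k
      rw [hcols, List.mem_reverse] at this
      exact List.mem_ofFn.mp this
    choose idx hidx using hex
    have heq : (fun j : Fin s => h (idx j) j) = sel := funext hidx
    have := hgen idx
    rwa [heq] at this
  obtain ⟨N, hN⟩ := montel_aux (∑ k, (cols k).length) cols rfl hne hgen' f hcont hf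
  refine ⟨N, fun g => hN _ ?_⟩
  simp
end
end

section
/- Let G be a commutative group, let h_1, …, h_s ∈ G generate G as a group, and let f, P_1, …, P_s : G → ℂ be functions with each P_k an exponential polynomial and Δ_{h_k} f = P_k for every k = 1, …, s. Then the complex vector space V = span{f} + τ(P_1) + τ(P_2) + ⋯ + τ(P_s), where τ(g) = span{τ_h g : h ∈ G}, is a finite-dimensional translation-invariant subspace of ℂ^G containing f (i.e. τ_h(V) ⊆ V for every h ∈ G and dim V < ∞). -/
noncomputable section

/-- The space `V = span{f} + τ(P 1) + ⋯ + τ(P s)` is a finite-dimensional translation-invariant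
subspace of `ℂ^G` containing `f`, whenever `h 1, …, h s` generate `G`, each `P k` is an
exponential polynomial and `Δ_{h k} f = P k` for every `k`.

Translation as a linear map. -/
def transLM {G : Type*} [AddCommGroup G] (a : G) : (G → ℂ) →ₗ[ℂ] (G → ℂ) where
  toFun := transOp a
  map_add' := fun _ _ => rfl
  map_smul' := fun _ _ => rfl

lemma tauSpan_invariant {G : Type*} [AddCommGroup G] (a : G) (g : G → ℂ) :
    Submodule.map (transLM a) (tauSpan g) ≤ tauSpan g := by
  rw [tauSpan, Submodule.map_span]
  apply Submodule.span_mono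
  rintro _ ⟨_, ⟨b, rfl⟩, rfl⟩
  exact ⟨b + a, by funext x; show g (x + (b + a)) = g (x + a + b); rw [add_assoc, add_comm b a]⟩

/-- The space `V = span{f} + τ(P 1) + ⋯ + τ(P s)` is a finite-dimensional translation-invariant
subspace of `ℂ^G` containing `f`, whenever `h 1, …, h s` generate `G`, each `P k` is an
exponential polynomial and `Δ_{h k} f = P k` for every `k`. -/
theorem span_translates_finiteDimensional_invariant {G : Type*} [AddCommGroup G] {s : ℕ}
    (h : Fin s → G)
    (hgen : AddSubgroup.closure (Set.range h) = ⊤)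
    (f : G → ℂ) (P : Fin s → G → ℂ)
    (hP : ∀ k : Fin s, IsExpPoly (P k))
    (hf : ∀ k : Fin s, fwdDiffOp (h k) f = P k) :
    f ∈ (Submodule.span ℂ {f} ⊔ ⨆ k : Fin s, tauSpan (P k)) ∧
    (∀ a : G, ∀ v ∈ (Submodule.span ℂ {f} ⊔ ⨆ k : Fin s, tauSpan (P k)),
      transOp a v ∈ (Submodule.span ℂ {f} ⊔ ⨆ k : Fin s, tauSpan (P k))) ∧
    FiniteDimensional ℂ (Submodule.span ℂ {f} ⊔ ⨆ k : Fin s, tauSpan (P k) :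
      Submodule ℂ (G → ℂ)) := by
  set W : Submodule ℂ (G → ℂ) := ⨆ k : Fin s, tauSpan (P k) with hW
  have hWinv : ∀ a : G, ∀ w ∈ W, transOp a w ∈ W := by
    intro a w hw
    have : Submodule.map (transLM a) W ≤ W := by
      rw [hW, Submodule.map_iSup]
      exact iSup_mono fun k => tauSpan_invariant a (P k)
    exact this ⟨w, hw, rfl⟩
  -- the set of a with τ_a f - f ∈ W is a subgroup containing all h k
  have key : ∀ a : G, transOp a f - f ∈ W := by
    have hS : ∀ a ∈ AddSubgroup.closure (Set.range h), transOp a f - f ∈ W := by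
      intro a ha
      induction ha using AddSubgroup.closure_induction with
      | mem b hb =>
        obtain ⟨k, rfl⟩ := hb
        have : transOp (h k) f - f = P k := by
          rw [← hf k]; funext x; simp [transOp, fwdDiffOp]
        rw [this]
        refine Submodule.mem_iSup_of_mem k ?_
        exact Submodule.subset_span ⟨0, by funext x; simp [transOp]⟩
      | zero =>
        have : transOp (0:G) f - f = 0 := by funext x; simp [transOp]
        rw [this]; exact W.zero_mem
      | add b c _ _ hb hc =>
        have heq : transOp (b + c) f - f
            = transOp b (transOp c f - f) + (transOp b f - f) := by
          funext x
          simp only [transOp, Pi.add_apply, Pi.sub_apply, add_assoc]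
          ring
        rw [heq]
        exact W.add_mem (hWinv b _ hc) hb
      | neg b _ hb =>
        have heq : transOp (-b) f - f = -(transOp (-b) (transOp b f - f)) := by
          funext x
          simp [transOp, Pi.sub_apply]
        rw [heq]
        exact W.neg_mem (hWinv (-b) _ hb)
    intro a
    exact hS a (hgen ▸ AddSubgroup.mem_top a)
  have hfV : f ∈ (Submodule.span ℂ {f} ⊔ W) :=
    Submodule.mem_sup_left (Submodule.mem_span_singleton_self f)
  refine ⟨hfV, ?_, ?_⟩
  · intro a v hv
    obtain ⟨y, hy, z, hz, rfl⟩ := Submodule.mem_sup.mp hv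
    obtain ⟨c, rfl⟩ := Submodule.mem_span_singleton.mp hy
    have : transOp a (c • f + z) = c • (f + (transOp a f - f)) + transOp a z := by
      funext x
      simp only [transOp, Pi.add_apply, Pi.smul_apply, Pi.sub_apply, smul_eq_mul]
      ring
    rw [this]
    refine Submodule.add_mem _ (Submodule.smul_mem _ _ ?_) (Submodule.mem_sup_right (hWinv a z hz))
    exact Submodule.add_mem _ hfV (Submodule.mem_sup_right (key a))
  · haveI h1 : FiniteDimensional ℂ (Submodule.span ℂ ({f} : Set (G → ℂ))) :=
      FiniteDimensional.span_of_finite ℂ (Set.finite_singleton f)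
    haveI : ∀ k : Fin s, FiniteDimensional ℂ (tauSpan (P k)) := hP
    haveI h2 : FiniteDimensional ℂ W := by
      rw [hW]
      exact Submodule.finiteDimensional_iSup _
    exact Submodule.finiteDimensional_sup _ _
end
end
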